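/- Let (ē*, f̄*, ā*) be optimal for the relaxed problem with rewards c_{ij} > 0. If ā*_i < 1 for all 1 ≤ i ≤ r, then ē*_{ii} = 0 for all 1 ≤ i ≤ r; in particular (ē*, f̄*, ā*) also satisfies the complementarity constraint. -/

import Mathlib

open Finset Filter Topology MeasureTheory

set_option maxHeartbeats 1000000

abbrev Mat (r : ℕ) := Fin r → Fin r → ℝ

/-- The network primitives: per-car arrival rates `lam`, travel rates `mu`,
and the row-stochastic destination matrix `P`. -/
structure NetParams (r : ℕ) where
  lam : Fin r → ℝ
  mu : Mat r
  P : Mat r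
  lam_pos : ∀ i, 0 < lam i
  mu_pos : ∀ i j, 0 < mu i j
  P_nonneg : ∀ i j, 0 ≤ P i j
  P_rowsum : ∀ i, ∑ j, P i j = 1

/-- `q` is a routing matrix: nonnegative entries with rows summing to one. -/
def IsRouting {r : ℕ} (q : Mat r) : Prop :=
  (∀ i j, 0 ≤ q i j) ∧ ∀ i, ∑ j, q i j = 1

/-- `(e, f)` belongs to the set 𝒯. -/
def MemT {r : ℕ} (e f : Mat r) : Prop :=
  (∀ i j, e i j ∈ Set.Icc (0:ℝ) 1) ∧ (∀ i j, f i j ∈ Set.Icc (0:ℝ) 1) ∧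
    (∑ i, ∑ j, (e i j + f i j)) = 1

/-- `(q, ebar, fbar, abar)` is feasible for the fluid-based optimization problem. -/
def FluidFeasible {r : ℕ} (np : NetParams r) (q ebar fbar : Mat r)
    (abar : Fin r → ℝ) : Prop :=
  IsRouting q ∧
  (∀ i j, np.lam i * np.P i j * abar i = np.mu i j * fbar i j) ∧
  (∀ i j, i ≠ j → np.mu i j * ebar i j = q i j * ∑ k, np.mu k i * fbar k i) ∧
  (∀ i, np.lam i * abar i =
    (∑ k ∈ Finset.univ.filter (fun k => k ≠ i), np.mu k i * ebar k i)
      + q i i * ∑ k, np.mu k i * fbar k i) ∧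
  (∀ i, (1 - abar i) * ebar i i = 0) ∧
  MemT ebar fbar ∧
  (∀ i, 0 ≤ abar i ∧ abar i ≤ 1)

/-- The objective value `U(ā) = Σ_{i,j} ā_i λ_i P_{ij} c_{ij}`. -/
noncomputable def objU {r : ℕ} (np : NetParams r) (c : Mat r) (abar : Fin r → ℝ) : ℝ :=
  ∑ i, ∑ j, abar i * np.lam i * np.P i j * c i j

/-- `(ebar, fbar, abar)` satisfies the relaxed constraints. -/
def RelaxedFeasible {r : ℕ} (np : NetParams r) (ebar fbar : Mat r)
    (abar : Fin r → ℝ) : Prop :=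
  (∀ i j, np.lam i * np.P i j * abar i = np.mu i j * fbar i j) ∧
  (∀ i j, i ≠ j → np.mu i j * ebar i j ≤ ∑ k, np.mu k i * fbar k i) ∧
  (∀ i, (∑ k ∈ Finset.univ.filter (fun k => k ≠ i), np.mu k i * ebar k i)
      ≤ np.lam i * abar i) ∧
  (∀ i, np.lam i * abar i ≤
    (∑ k ∈ Finset.univ.filter (fun k => k ≠ i), np.mu k i * ebar k i)
      + ∑ k, np.mu k i * fbar k i) ∧
  (∀ i, np.lam i * abar i
      + (∑ j ∈ Finset.univ.filter (fun j => j ≠ i), np.mu i j * ebar i j)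
    = (∑ k ∈ Finset.univ.filter (fun k => k ≠ i), np.mu k i * ebar k i)
      + ∑ k, np.mu k i * fbar k i) ∧
  MemT ebar fbar ∧
  (∀ i, 0 ≤ abar i ∧ abar i ≤ 1)

/-- The complementarity constraint `(1 − ā_i) ē_{ii} = 0` for all `i`. -/
def Complementarity {r : ℕ} (ebar : Mat r) (abar : Fin r → ℝ) : Prop :=
  ∀ i, (1 - abar i) * ebar i i = 0

/-- Lemma 2, part 1: if an optimal solution of the relaxed problem has `ā_i < 1`
for all `i`, then `ē_{ii} = 0` for all `i`; in particular it satisfies the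
complementarity constraint. -/
-- stationary distribution existence
lemma exists_stationary {r : ℕ} (hr : 1 ≤ r) (P : Fin r → Fin r → ℝ)
    (hP : ∀ i j, 0 ≤ P i j) (hPs : ∀ i, ∑ j, P i j = 1) :
    ∃ x : Fin r → ℝ, (∀ i, 0 ≤ x i) ∧ (∑ i, x i) = 1 ∧
      ∀ i, ∑ k, x k * P k i = x i := by
  have hr' : 0 < r := hr
  have hrne : (r:ℝ) ≠ 0 := by positivity
  -- the operator
  set T : (Fin r → ℝ) → (Fin r → ℝ) := fun y i => ∑ k, y k * P k i with hT
  -- simplex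
  set Δ : Set (Fin r → ℝ) := {y | (∀ i, 0 ≤ y i) ∧ ∑ i, y i = 1} with hΔ
  have hTsum : ∀ y : Fin r → ℝ, ∑ i, T y i = ∑ k, y k := by
    intro y
    rw [show ∑ i, T y i = ∑ i, ∑ k, y k * P k i from rfl, Finset.sum_comm]
    refine Finset.sum_congr rfl fun k _ => ?_
    rw [← Finset.mul_sum, hPs k, mul_one]
  have hTmem : ∀ y ∈ Δ, T y ∈ Δ := by
    intro y hy
    exact ⟨fun i => Finset.sum_nonneg fun k _ => mul_nonneg (hy.1 k) (hP k i),
      by rw [hTsum]; exact hy.2⟩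
  -- iterates
  set v0 : Fin r → ℝ := fun _ => (r : ℝ)⁻¹ with hv0
  have hv0Δ : v0 ∈ Δ := by
    refine ⟨fun i => by positivity, ?_⟩
    simp [hv0]
    rw [mul_inv_cancel₀ hrne]
  set u : ℕ → (Fin r → ℝ) := fun n => T^[n] v0 with hu
  have husucc : ∀ n, u (n+1) = T (u n) := by
    intro n; simp [hu, Function.iterate_succ_apply']
  have huΔ : ∀ n, u n ∈ Δ := by
    intro n
    induction n with
    | zero => simpa [hu] using hv0Δ
    | succ n ih => rw [husucc]; exact hTmem _ ih
  have hub : ∀ n i, u n i ∈ Set.Icc (0:ℝ) 1 := by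
    intro n i
    refine ⟨(huΔ n).1 i, ?_⟩
    calc u n i ≤ ∑ j, u n j :=
          Finset.single_le_sum (fun j _ => (huΔ n).1 j) (Finset.mem_univ i)
      _ = 1 := (huΔ n).2
  -- Cesàro averages
  set w : ℕ → (Fin r → ℝ) := fun n i => (∑ m ∈ Finset.range (n+1), u m i) / (n+1) with hw
  have hnpos : ∀ n : ℕ, (0:ℝ) < (n:ℝ) + 1 := fun n => by positivity
  have hwΔ : ∀ n, w n ∈ Δ := by
    intro n
    constructor
    · intro i
      exact div_nonneg (Finset.sum_nonneg fun m _ => (huΔ m).1 i) (hnpos n).le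
    · rw [hw]
      simp only
      rw [← Finset.sum_div, Finset.sum_comm]
      rw [Finset.sum_congr rfl fun m _ => (huΔ m).2]
      rw [Finset.sum_const, Finset.card_range, nsmul_eq_mul]
      push_cast
      field_simp
  -- key identity
  have hkey : ∀ n i, T (w n) i = w n i + (u (n+1) i - u 0 i) / (n+1) := by
    intro n i
    have h1 : T (w n) i = (∑ m ∈ Finset.range (n+1), u (m+1) i) / (n+1) := by
      show (∑ k, w n k * P k i) = _
      have : ∀ k, w n k * P k i = (∑ m ∈ Finset.range (n+1), u m k * P k i) / (n+1) := by
        intro k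
        rw [hw]; simp only
        rw [div_mul_eq_mul_div, Finset.sum_mul]
      rw [Finset.sum_congr rfl fun k _ => this k, ← Finset.sum_div, Finset.sum_comm]
      congr 1
      refine Finset.sum_congr rfl fun m _ => ?_
      rw [husucc]
    rw [h1, hw]
    simp only
    have h2 : (∑ m ∈ Finset.range (n+1), u (m+1) i)
        = (∑ m ∈ Finset.range (n+1), u m i) + u (n+1) i - u 0 i := by
      rw [Finset.sum_range_succ (fun m => u (m+1) i),
        Finset.sum_range_succ' (fun m => u m i)]
      ring
    rw [h2]
    ring
  -- compactness
  have hΔc : IsCompact Δ := by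
    have hsub : Δ ⊆ Set.Icc (0 : Fin r → ℝ) 1 := by
      intro y hy
      constructor
      · intro i; exact hy.1 i
      · intro i
        calc y i ≤ ∑ j, y j :=
              Finset.single_le_sum (fun j _ => hy.1 j) (Finset.mem_univ i)
          _ = 1 := hy.2
    have hclosed : IsClosed Δ := by
      have h1 : IsClosed {y : Fin r → ℝ | ∀ i, 0 ≤ y i} := by
        have : {y : Fin r → ℝ | ∀ i, 0 ≤ y i} = ⋂ i, {y | 0 ≤ y i} := by
          ext y; simp
        rw [this]
        exact isClosed_iInter fun i => isClosed_le continuous_const (continuous_apply i)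
      have h2 : IsClosed {y : Fin r → ℝ | ∑ i, y i = 1} :=
        isClosed_eq (by continuity) continuous_const
      exact h1.inter h2
    exact (isCompact_Icc).of_isClosed_subset hclosed hsub
  obtain ⟨x, hxΔ, φ, hφ, hconv⟩ := hΔc.tendsto_subseq (fun n => hwΔ n)
  refine ⟨x, hxΔ.1, hxΔ.2, fun i => ?_⟩
  have hconvi : ∀ j, Tendsto (fun n => w (φ n) j) atTop (𝓝 (x j)) := by
    intro j
    exact ((continuous_apply j).continuousAt.tendsto).comp hconv
  -- limit of T (w (φ n)) i equals T x i
  have hTlim : Tendsto (fun n => T (w (φ n)) i) atTop (𝓝 (∑ k, x k * P k i)) := by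
    apply tendsto_finset_sum
    intro k _
    exact (hconvi k).mul tendsto_const_nhds
  -- and also equals x i
  have herr : Tendsto (fun n => (u (φ n + 1) i - u 0 i) / ((φ n : ℝ) + 1)) atTop (𝓝 0) := by
    refine squeeze_zero_norm (a := fun n => 1 / ((φ n : ℝ) + 1)) ?_ ?_
    · intro n
      have h1 := hub (φ n + 1) i
      have h2 := hub 0 i
      have habs : |u (φ n + 1) i - u 0 i| ≤ 1 := by
        rw [abs_le]
        exact ⟨by nlinarith [h1.1, h1.2, h2.1, h2.2], by nlinarith [h1.1, h1.2, h2.1, h2.2]⟩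
      rw [norm_div, Real.norm_eq_abs, Real.norm_eq_abs, abs_of_pos (hnpos (φ n))]
      exact div_le_div_of_nonneg_right habs (hnpos (φ n)).le
    · have h0 : Tendsto (fun n : ℕ => 1 / ((n : ℝ) + 1)) atTop (𝓝 0) :=
        tendsto_one_div_add_atTop_nhds_zero_nat
      exact h0.comp hφ.tendsto_atTop
  have hTlim2 : Tendsto (fun n => T (w (φ n)) i) atTop (𝓝 (x i)) := by
    have : (fun n => T (w (φ n)) i)
        = fun n => w (φ n) i + (u (φ n + 1) i - u 0 i) / ((φ n : ℝ) + 1) := by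
      funext n; rw [hkey]
    rw [this]
    simpa using (hconvi i).add herr
  exact tendsto_nhds_unique hTlim hTlim2

-- helpers
lemma double_ite_sum {r : ℕ} (i0 : Fin r) (a : ℝ) :
    ∑ i, ∑ j, (if i = i0 ∧ j = i0 then a else 0) = a := by
  have h : ∀ i : Fin r, ∑ j, (if i = i0 ∧ j = i0 then a else 0)
      = if i = i0 then a else 0 := by
    intro i
    by_cases h : i = i0 <;> simp [h]
  rw [Finset.sum_congr rfl fun i _ => h i]
  simp

lemma entry_le_one {r : ℕ} (g : Mat r) (hg : ∀ i j, 0 ≤ g i j)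
    (hs : ∑ i, ∑ j, g i j = 1) : ∀ i j, g i j ≤ 1 := by
  intro i j
  calc g i j ≤ ∑ j', g i j' :=
        Finset.single_le_sum (fun j' _ => hg i j') (Finset.mem_univ j)
    _ ≤ ∑ i', ∑ j', g i' j' :=
        Finset.single_le_sum
          (fun i' _ => Finset.sum_nonneg fun j' _ => hg i' j') (Finset.mem_univ i)
    _ = 1 := hs

theorem stmt_4 {r : ℕ} (hr : 1 ≤ r) (np : NetParams r) (c : Mat r)
    (hc : ∀ i j, 0 < c i j)
    (ebar fbar : Mat r) (abar : Fin r → ℝ)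
    (hfeas : RelaxedFeasible np ebar fbar abar)
    (hopt : ∀ (e' f' : Mat r) (a' : Fin r → ℝ),
      RelaxedFeasible np e' f' a' → objU np c a' ≤ objU np c abar)
    (hlt : ∀ i, abar i < 1) :
    (∀ i, ebar i i = 0) ∧ Complementarity ebar abar := by
  haveI : Nonempty (Fin r) := ⟨⟨0, hr⟩⟩
  obtain ⟨h1, h2, h3, h4, h5, ⟨hE, hF, hsum⟩, h7⟩ := hfeas
  ---- Step A: construct a feasible point with positive objective
  obtain ⟨x, hx0, hx1, hxs⟩ := exists_stationary hr np.P np.P_nonneg np.P_rowsum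
  set i0' : Fin r := ⟨0, hr⟩ with hi0'
  set M : ℝ := ∑ i, ∑ j, x i * np.P i j / np.mu i j with hM
  set N : ℝ := ∑ i, x i / np.lam i with hN
  have hM0 : 0 ≤ M := Finset.sum_nonneg fun i _ => Finset.sum_nonneg fun j _ =>
    div_nonneg (mul_nonneg (hx0 i) (np.P_nonneg i j)) (np.mu_pos i j).le
  have hN0 : 0 ≤ N := Finset.sum_nonneg fun i _ =>
    div_nonneg (hx0 i) (np.lam_pos i).le
  set K : ℝ := 1 + M + N with hK
  have hKpos : 0 < K := by positivity
  set s : ℝ := K⁻¹ with hs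
  have hs0 : 0 < s := by positivity
  have hsM : s * M ≤ 1 := by
    rw [hs, inv_mul_le_iff₀ hKpos]
    simp only [hK, one_mul]; linarith
  have hsN : s * N ≤ 1 := by
    rw [hs, inv_mul_le_iff₀ hKpos]
    simp only [hK, one_mul]; linarith
  set a' : Fin r → ℝ := fun i => s * x i / np.lam i with ha'
  set f' : Mat r := fun i j => s * x i * np.P i j / np.mu i j with hf'
  set e' : Mat r := fun i j => if i = i0' ∧ j = i0' then 1 - s * M else 0 with he'
  have hla : ∀ i, np.lam i * a' i = s * x i := by
    intro i; rw [ha']; field_simp [(np.lam_pos i).ne']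
  have hmf : ∀ i j, np.mu i j * f' i j = s * x i * np.P i j := by
    intro i j; rw [hf']; field_simp [(np.mu_pos i j).ne']
  have hf0 : ∀ i j, 0 ≤ f' i j := by
    intro i j; rw [hf']
    have := np.mu_pos i j
    have := np.P_nonneg i j
    have := hx0 i
    positivity
  have hsumf : ∀ i, ∑ k, np.mu k i * f' k i = s * x i := by
    intro i
    rw [Finset.sum_congr rfl fun k _ => hmf k i]
    calc ∑ k, s * x k * np.P k i = s * ∑ k, x k * np.P k i := by
          rw [Finset.mul_sum]; exact Finset.sum_congr rfl fun k _ => by ring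
      _ = s * x i := by rw [hxs i]
  have heoff : ∀ i j : Fin r, i ≠ j → e' i j = 0 := by
    intro i j hij
    rw [he']
    simp only [ite_eq_right_iff]
    rintro ⟨rfl, rfl⟩
    exact absurd rfl hij
  have hsumf' : ∀ i : Fin r, ∑ i', ∑ j', f' i' j' = s * M := by
    intro _
    calc ∑ i', ∑ j', f' i' j' = ∑ i', ∑ j', s * (x i' * np.P i' j' / np.mu i' j') := by
          refine Finset.sum_congr rfl fun i' _ => Finset.sum_congr rfl fun j' _ => ?_
          rw [hf']; ring
      _ = s * M := by
          rw [hM, Finset.mul_sum]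
          refine Finset.sum_congr rfl fun i' _ => ?_
          rw [Finset.mul_sum]
  have hfeas' : RelaxedFeasible np e' f' a' := by
    refine ⟨?_, ?_, ?_, ?_, ?_, ⟨?_, ?_, ?_⟩, ?_⟩
    · intro i j
      rw [hmf, ha']
      field_simp [(np.lam_pos i).ne']
    · intro i j hij
      rw [hsumf i, heoff i j hij, mul_zero]
      exact mul_nonneg hs0.le (hx0 i)
    · intro i
      rw [hla]
      have : ∑ k ∈ Finset.univ.filter (fun k => k ≠ i), np.mu k i * e' k i = 0 := by
        refine Finset.sum_eq_zero fun k hk => ?_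
        rw [heoff k i (Finset.mem_filter.mp hk).2, mul_zero]
      rw [this]
      exact mul_nonneg hs0.le (hx0 i)
    · intro i
      rw [hla, hsumf i]
      have : ∑ k ∈ Finset.univ.filter (fun k => k ≠ i), np.mu k i * e' k i = 0 := by
        refine Finset.sum_eq_zero fun k hk => ?_
        rw [heoff k i (Finset.mem_filter.mp hk).2, mul_zero]
      rw [this]; linarith
    · intro i
      rw [hla, hsumf i]
      have hz1 : ∑ k ∈ Finset.univ.filter (fun k => k ≠ i), np.mu k i * e' k i = 0 := by
        refine Finset.sum_eq_zero fun k hk => ?_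
        rw [heoff k i (Finset.mem_filter.mp hk).2, mul_zero]
      have hz2 : ∑ j ∈ Finset.univ.filter (fun j => j ≠ i), np.mu i j * e' i j = 0 := by
        refine Finset.sum_eq_zero fun j hj => ?_
        rw [heoff i j (Ne.symm (Finset.mem_filter.mp hj).2), mul_zero]
      rw [hz1, hz2]
      ring
    · intro i j
      simp only [he']
      by_cases h : i = i0' ∧ j = i0'
      · rw [if_pos h]
        constructor
        · linarith
        · nlinarith [mul_nonneg hs0.le hM0]
      · rw [if_neg h]
        constructor <;> norm_num
    · intro i j
      refine ⟨hf0 i j, ?_⟩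
      have hterm : x i * np.P i j / np.mu i j ≤ M := by
        calc x i * np.P i j / np.mu i j ≤ ∑ j', x i * np.P i j' / np.mu i j' :=
              Finset.single_le_sum (fun j' _ => div_nonneg
                (mul_nonneg (hx0 i) (np.P_nonneg i j')) (np.mu_pos i j').le)
                (Finset.mem_univ j)
          _ ≤ M := Finset.single_le_sum (fun i' _ => Finset.sum_nonneg fun j' _ =>
                div_nonneg (mul_nonneg (hx0 i') (np.P_nonneg i' j')) (np.mu_pos i' j').le)
                (Finset.mem_univ i)
      calc f' i j = s * (x i * np.P i j / np.mu i j) := by rw [hf']; ring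
        _ ≤ s * M := mul_le_mul_of_nonneg_left hterm hs0.le
        _ ≤ 1 := hsM
    · rw [Finset.sum_congr rfl fun i _ => Finset.sum_add_distrib]
      rw [Finset.sum_add_distrib]
      rw [hsumf' i0']
      rw [he', double_ite_sum i0' (1 - s * M)]
      ring
    · intro i
      constructor
      · rw [ha']
        have := np.lam_pos i; have := hx0 i
        positivity
      · have hterm : x i / np.lam i ≤ N :=
          Finset.single_le_sum (fun i' _ => div_nonneg (hx0 i') (np.lam_pos i').le)
            (Finset.mem_univ i)
        calc a' i = s * (x i / np.lam i) := by rw [ha']; ring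
          _ ≤ s * N := mul_le_mul_of_nonneg_left hterm hs0.le
          _ ≤ 1 := hsN
  -- positive objective at a'
  obtain ⟨iS, hiS⟩ : ∃ i, 0 < x i := by
    by_contra h
    push_neg at h
    have : ∑ i, x i = 0 := Finset.sum_eq_zero fun i _ => le_antisymm (h i) (hx0 i)
    rw [hx1] at this; norm_num at this
  obtain ⟨jS, hjS⟩ : ∃ j, 0 < np.P iS j := by
    by_contra h
    push_neg at h
    have : ∑ j, np.P iS j = 0 :=
      Finset.sum_eq_zero fun j _ => le_antisymm (h j) (np.P_nonneg iS j)
    rw [np.P_rowsum iS] at this; norm_num at this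
  have hU' : 0 < objU np c a' := by
    unfold objU
    refine Finset.sum_pos' (fun i _ => Finset.sum_nonneg fun j _ => ?_) ⟨iS, Finset.mem_univ iS, ?_⟩
    · have : 0 ≤ a' i := by
        rw [ha']; have := np.lam_pos i; have := hx0 i; positivity
      have := np.lam_pos i; have := np.P_nonneg i j; have := (hc i j).le
      positivity
    · refine Finset.sum_pos' (fun j _ => ?_) ⟨jS, Finset.mem_univ jS, ?_⟩
      · have : 0 ≤ a' iS := by
          rw [ha']; have := np.lam_pos iS; have := hx0 iS; positivity
        have := np.lam_pos iS; have := np.P_nonneg iS j; have := (hc iS j).le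
        positivity
      · have ha'pos : 0 < a' iS := by
          rw [ha']; have := np.lam_pos iS; positivity
        have := np.lam_pos iS; have := hc iS jS
        positivity
  have hU : 0 < objU np c abar := lt_of_lt_of_le hU' (hopt e' f' a' hfeas')
  ---- Step B: some abar is positive
  obtain ⟨i1, hi1⟩ : ∃ i, 0 < abar i := by
    by_contra h
    push_neg at h
    have : objU np c abar = 0 := by
      unfold objU
      refine Finset.sum_eq_zero fun i _ => Finset.sum_eq_zero fun j _ => ?_
      have : abar i = 0 := le_antisymm (h i) (h7 i).1
      rw [this]; ring
    rw [this] at hU; norm_num at hU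
  ---- Step C: diagonal entries vanish
  have hmain : ∀ i0 : Fin r, ebar i0 i0 = 0 := by
    intro i0
    by_contra hne
    have hε : 0 < ebar i0 i0 := lt_of_le_of_ne (hE i0 i0).1 (Ne.symm hne)
    have hε1 : ebar i0 i0 ≤ 1 := (hE i0 i0).2
    set A : ℝ := Finset.univ.sup' Finset.univ_nonempty abar with hA
    have hA1 : A < 1 := (Finset.sup'_lt_iff Finset.univ_nonempty).mpr fun i _ => hlt i
    have hA0 : 0 < A := lt_of_lt_of_le hi1 (Finset.le_sup' abar (Finset.mem_univ i1))
    have hAinv : 1 < A⁻¹ := (one_lt_inv₀ hA0).mpr hA1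
    set t : ℝ := min A⁻¹ (1 + ebar i0 i0) with ht
    have ht1 : 1 < t := lt_min hAinv (by linarith)
    have ht0 : 0 ≤ t := by linarith
    have htA : ∀ i, t * abar i ≤ 1 := by
      intro i
      have h1 : abar i ≤ A := Finset.le_sup' abar (Finset.mem_univ i)
      have h2 : t ≤ A⁻¹ := min_le_left _ _
      calc t * abar i ≤ A⁻¹ * A := by
            apply mul_le_mul h2 h1 (h7 i).1 (by positivity)
        _ = 1 := inv_mul_cancel₀ hA0.ne'
    have hte : 0 ≤ 1 - t * (1 - ebar i0 i0) := by
      have h2 : t ≤ 1 + ebar i0 i0 := min_le_right _ _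
      nlinarith
    set a'' : Fin r → ℝ := fun i => t * abar i with ha''
    set f'' : Mat r := fun i j => t * fbar i j with hf''
    set e'' : Mat r := fun i j => t * ebar i j + (if i = i0 ∧ j = i0 then 1 - t else 0)
      with he''
    have heoff2 : ∀ i j : Fin r, i ≠ j → e'' i j = t * ebar i j := by
      intro i j hij
      rw [he'']
      simp only [add_eq_left, ite_eq_right_iff]
      rintro ⟨rfl, rfl⟩
      exact absurd rfl hij
    have he''0 : ∀ i j, 0 ≤ e'' i j := by
      intro i j
      simp only [he'']
      by_cases h : i = i0 ∧ j = i0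
      · obtain ⟨h1', h2'⟩ := h
        subst h1'; subst h2'
        rw [if_pos ⟨rfl, rfl⟩]
        nlinarith [hte]
      · rw [if_neg h, add_zero]
        exact mul_nonneg ht0 (hE i j).1
    have hf''0 : ∀ i j, 0 ≤ f'' i j := fun i j => mul_nonneg ht0 (hF i j).1
    have hsum'' : ∑ i, ∑ j, (e'' i j + f'' i j) = 1 := by
      have : ∀ i j : Fin r, e'' i j + f'' i j
          = t * (ebar i j + fbar i j) + (if i = i0 ∧ j = i0 then 1 - t else 0) := by
        intro i j; rw [he'', hf'']; ring
      rw [Finset.sum_congr rfl fun i _ => Finset.sum_congr rfl fun j _ => this i j]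
      rw [Finset.sum_congr rfl fun i _ => Finset.sum_add_distrib, Finset.sum_add_distrib]
      rw [double_ite_sum i0 (1 - t)]
      have : ∑ i, ∑ j, t * (ebar i j + fbar i j) = t := by
        calc ∑ i, ∑ j, t * (ebar i j + fbar i j)
            = t * ∑ i, ∑ j, (ebar i j + fbar i j) := by
              rw [Finset.mul_sum]
              exact Finset.sum_congr rfl fun i _ => by rw [Finset.mul_sum]
          _ = t := by rw [hsum, mul_one]
      rw [this]; ring
    have hfilter_e : ∀ i : Fin r,
        ∑ k ∈ Finset.univ.filter (fun k => k ≠ i), np.mu k i * e'' k i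
        = t * ∑ k ∈ Finset.univ.filter (fun k => k ≠ i), np.mu k i * ebar k i := by
      intro i
      rw [Finset.mul_sum]
      refine Finset.sum_congr rfl fun k hk => ?_
      rw [heoff2 k i (Finset.mem_filter.mp hk).2]; ring
    have hfilter_e2 : ∀ i : Fin r,
        ∑ j ∈ Finset.univ.filter (fun j => j ≠ i), np.mu i j * e'' i j
        = t * ∑ j ∈ Finset.univ.filter (fun j => j ≠ i), np.mu i j * ebar i j := by
      intro i
      rw [Finset.mul_sum]
      refine Finset.sum_congr rfl fun j hj => ?_
      rw [heoff2 i j (Ne.symm (Finset.mem_filter.mp hj).2)]; ring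
    have hsum_f : ∀ i : Fin r,
        ∑ k, np.mu k i * f'' k i = t * ∑ k, np.mu k i * fbar k i := by
      intro i
      rw [Finset.mul_sum]
      exact Finset.sum_congr rfl fun k _ => by rw [hf'']; ring
    have hfeas'' : RelaxedFeasible np e'' f'' a'' := by
      refine ⟨?_, ?_, ?_, ?_, ?_, ⟨?_, ?_, hsum''⟩, ?_⟩
      · intro i j
        rw [ha'', hf'']
        simp only
        linear_combination t * h1 i j
      · intro i j hij
        calc np.mu i j * e'' i j = t * (np.mu i j * ebar i j) := by
              rw [heoff2 i j hij]; ring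
          _ ≤ t * ∑ k, np.mu k i * fbar k i :=
              mul_le_mul_of_nonneg_left (h2 i j hij) ht0
          _ = ∑ k, np.mu k i * f'' k i := (hsum_f i).symm
      · intro i
        rw [hfilter_e i, ha'']
        calc t * ∑ k ∈ Finset.univ.filter (fun k => k ≠ i), np.mu k i * ebar k i
            ≤ t * (np.lam i * abar i) := mul_le_mul_of_nonneg_left (h3 i) ht0
          _ = np.lam i * (t * abar i) := by ring
      · intro i
        rw [hfilter_e i, hsum_f i, ha'']
        calc np.lam i * (t * abar i) = t * (np.lam i * abar i) := by ring
          _ ≤ t * ((∑ k ∈ Finset.univ.filter (fun k => k ≠ i), np.mu k i * ebar k i)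
              + ∑ k, np.mu k i * fbar k i) := mul_le_mul_of_nonneg_left (h4 i) ht0
          _ = _ := by ring
      · intro i
        rw [hfilter_e i, hfilter_e2 i, hsum_f i, ha'']
        linear_combination t * h5 i
      · intro i j
        refine ⟨he''0 i j, ?_⟩
        have := entry_le_one (fun i j => e'' i j + f'' i j)
          (fun i j => add_nonneg (he''0 i j) (hf''0 i j)) hsum'' i j
        have := hf''0 i j
        linarith
      · intro i j
        refine ⟨hf''0 i j, ?_⟩
        have := entry_le_one (fun i j => e'' i j + f'' i j)
          (fun i j => add_nonneg (he''0 i j) (hf''0 i j)) hsum'' i j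
        have := he''0 i j
        linarith
      · intro i
        exact ⟨mul_nonneg ht0 (h7 i).1, htA i⟩
    have hobj : objU np c a'' = t * objU np c abar := by
      unfold objU
      rw [Finset.mul_sum]
      refine Finset.sum_congr rfl fun i _ => ?_
      rw [Finset.mul_sum]
      refine Finset.sum_congr rfl fun j _ => ?_
      rw [ha'']; ring
    have := hopt e'' f'' a'' hfeas''
    rw [hobj] at this
    nlinarith
  exact ⟨hmain, fun i => by rw [hmain i, mul_zero]⟩
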